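/- At any interior stationary point of the Lagrangian J(l,μ) = ∑ᵢ log₂(1 + P₁ᵢ/(σ² + Iq_i)) + μ(D − ∑ᵢ l_i) with Iq_i = N·P₂ᵢ·c·2^{-2l_i}, the quantity (Iq_i · P₁ᵢ) / ((Iq_i + σ²)(P₁ᵢ + Iq_i + σ²)) takes the same value A for every user i. -/

import Mathlib

theorem stmt_7 (N : ℕ) (hN : 1 ≤ N) (P1 P2 : Fin N → ℝ) (σ2 c D : ℝ)
    (hP1 : ∀ i, 0 < P1 i) (hP2 : ∀ i, 0 < P2 i) (hσ : 0 < σ2) (hc : 0 < c)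
    (hD : 0 < D)
    (Iq : Fin N → ℝ → ℝ)
    (hIq : ∀ i t, Iq i t = (N : ℝ) * P2 i * c * (2 : ℝ) ^ (-(2 * t)))
    (J : (Fin N → ℝ) → ℝ → ℝ)
    (hJ : ∀ l m, J l m =
      (∑ i, Real.logb 2 (1 + P1 i / (σ2 + Iq i (l i)))) + m * (D - ∑ i, l i))
    (l : Fin N → ℝ) (m : ℝ)
    (hl : ∀ i, 0 < l i)
    (hstat : ∀ i, deriv (fun t => J (Function.update l i t) m) (l i) = 0)
    (hstatμ : deriv (fun t => J l t) m = 0) :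
    ∃ A : ℝ, ∀ i,
      Iq i (l i) * P1 i / ((Iq i (l i) + σ2) * (P1 i + Iq i (l i) + σ2)) = A := by
  refine ⟨m / 2, fun i => ?_⟩
  set K := (N : ℝ) * P2 i * c with hK
  have hKpos : 0 < K := by
    have hNpos : (0 : ℝ) < N := by exact_mod_cast Nat.lt_of_lt_of_le Nat.zero_lt_one hN
    rw [hK]; exact mul_pos (mul_pos hNpos (hP2 i)) hc
  set q := Iq i (l i) with hq
  have hqpos : 0 < q := by
    rw [hq, hIq]
    positivity
  have hupos : 0 < σ2 + q := by linarith
  -- rewrite the function of t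
  have hfun : (fun t => J (Function.update l i t) m) =
      (fun t => Real.logb 2 (1 + P1 i / (σ2 + K * (2 : ℝ) ^ (-(2 * t)))) +
        ((∑ j ∈ Finset.univ.erase i, Real.logb 2 (1 + P1 j / (σ2 + Iq j (l j)))) +
          m * (D - (t + ∑ j ∈ Finset.univ.erase i, l j)))) := by
    funext t
    rw [hJ]
    have h1 : ∑ j, Real.logb 2 (1 + P1 j / (σ2 + Iq j (Function.update l i t j))) =
        Real.logb 2 (1 + P1 i / (σ2 + K * (2 : ℝ) ^ (-(2 * t)))) +
          ∑ j ∈ Finset.univ.erase i, Real.logb 2 (1 + P1 j / (σ2 + Iq j (l j))) := by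
      rw [← Finset.add_sum_erase _ _ (Finset.mem_univ i)]
      congr 1
      · rw [Function.update_self, hIq, hK]
      · exact Finset.sum_congr rfl fun j hj => by
          rw [Function.update_of_ne (Finset.ne_of_mem_erase hj)]
    have h2 : ∑ j, Function.update l i t j = t + ∑ j ∈ Finset.univ.erase i, l j := by
      rw [← Finset.add_sum_erase _ _ (Finset.mem_univ i), Function.update_self]
      congr 1
      exact Finset.sum_congr rfl fun j hj => by
        rw [Function.update_of_ne (Finset.ne_of_mem_erase hj)]
    rw [h1, h2]
    ring
  -- derivative computation
  have hexp : HasDerivAt (fun t : ℝ => (2 : ℝ) ^ (-(2 * t)))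
      ((2 : ℝ) ^ (-(2 * l i)) * Real.log 2 * (-2)) (l i) := by
    have h0 : HasDerivAt (fun t : ℝ => -(2 * t)) (-2) (l i) := by
      simpa using ((hasDerivAt_id (l i)).const_mul (2 : ℝ)).fun_neg
    exact (Real.hasStrictDerivAt_const_rpow (by norm_num : (0:ℝ) < 2)
      (-(2 * l i))).hasDerivAt.comp (l i) h0 |>.congr_deriv (by ring)
  have hq' : q = K * (2 : ℝ) ^ (-(2 * l i)) := by rw [hq, hIq, hK]
  have hu : HasDerivAt (fun t : ℝ => σ2 + K * (2 : ℝ) ^ (-(2 * t)))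
      (-2 * Real.log 2 * q) (l i) := by
    have := ((hexp.const_mul K).const_add σ2)
    refine this.congr_deriv ?_
    rw [hq']; ring
  have huval : σ2 + K * (2 : ℝ) ^ (-(2 * l i)) = σ2 + q := by rw [hq']
  have hune : σ2 + K * (2 : ℝ) ^ (-(2 * l i)) ≠ 0 := by rw [huval]; exact ne_of_gt hupos
  have hv : HasDerivAt (fun t : ℝ => 1 + P1 i / (σ2 + K * (2 : ℝ) ^ (-(2 * t))))
      (-(P1 i * (-2 * Real.log 2 * q)) / (σ2 + q) ^ 2) (l i) := by
    have := ((hasDerivAt_const (l i) (P1 i)).div hu hune).const_add 1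
    refine this.congr_deriv ?_
    rw [huval]; ring
  have hvval : 1 + P1 i / (σ2 + K * (2 : ℝ) ^ (-(2 * l i))) = 1 + P1 i / (σ2 + q) := by
    rw [huval]
  have hvpos : 0 < 1 + P1 i / (σ2 + q) := by
    have := div_pos (hP1 i) hupos; linarith
  have hvne : 1 + P1 i / (σ2 + K * (2 : ℝ) ^ (-(2 * l i))) ≠ 0 := by
    rw [hvval]; exact ne_of_gt hvpos
  have hlog : HasDerivAt
      (fun t : ℝ => Real.logb 2 (1 + P1 i / (σ2 + K * (2 : ℝ) ^ (-(2 * t)))))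
      ((-(P1 i * (-2 * Real.log 2 * q)) / (σ2 + q) ^ 2) / (1 + P1 i / (σ2 + q)) /
        Real.log 2) (l i) := by
    have := (hv.log hvne).div_const (Real.log 2)
    simp only [Real.logb] at this ⊢
    refine this.congr_deriv ?_
    rw [hvval]
  have hlin : HasDerivAt (fun t : ℝ =>
      ((∑ j ∈ Finset.univ.erase i, Real.logb 2 (1 + P1 j / (σ2 + Iq j (l j)))) +
        m * (D - (t + ∑ j ∈ Finset.univ.erase i, l j)))) (-m) (l i) := by
    have h0 : HasDerivAt (fun t : ℝ =>
        D - (t + ∑ j ∈ Finset.univ.erase i, l j)) (-1) (l i) := by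
      simpa using ((hasDerivAt_id (l i)).add_const
        (∑ j ∈ Finset.univ.erase i, l j)).const_sub D
    simpa using (h0.const_mul m).const_add
      ((∑ j ∈ Finset.univ.erase i, Real.logb 2 (1 + P1 j / (σ2 + Iq j (l j)))))
  have htot := (hlog.fun_add hlin)
  rw [← hfun] at htot
  have heq := htot.deriv
  rw [hstat i] at heq
  -- algebra
  have hlog2 : Real.log 2 ≠ 0 := by
    exact ne_of_gt (Real.log_pos (by norm_num))
  have hP1i := hP1 i
  have hne1 : (σ2 + q) ≠ 0 := ne_of_gt hupos
  have hne2 : (P1 i + q + σ2) ≠ 0 := by linarith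
  have hvne' : (1 + P1 i / (σ2 + q)) ≠ 0 := ne_of_gt hvpos
  field_simp at heq
  have hf : (Real.log 2 * (σ2 + q)) * (m * ((σ2 + q) * (σ2 + q + P1 i))) =
      (Real.log 2 * (σ2 + q)) * (2 * P1 i * q) := by linear_combination (Real.log 2 * (σ2 + q)) * heq
  have h' := mul_left_cancel₀ (mul_ne_zero hlog2 hne1) hf
  field_simp
  linear_combination -h'
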